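/- For every integer k ≥ 0, every z ∈ I, and every (c_0, …, c_k) ∈ ℝ^{k+1}, there exists a unique w-polynomial p ∈ P^{≤k} such that p^{(j)}(z) = c_j for all j ∈ {0, …, k}; moreover, this p is locally bounded on I and p/w_0 is continuous on I. -/

import Mathlib

open MeasureTheory Set Filter
open scoped ENNReal

noncomputable section

/-- `g` is right-continuous at every point of `I` that is not the greatest point of `I`,
and left-continuous at the greatest point of `I` when the latter exists (the class `LD`). -/
def IsLD (I : Set ℝ) (g : ℝ → ℝ) : Prop :=
  (∀ x ∈ I, (∃ y ∈ I, x < y) → Tendsto g (nhdsWithin x (I ∩ Ioi x)) (nhds (g x))) ∧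
  (∀ x ∈ I, (∀ y ∈ I, y ≤ x) → Tendsto g (nhdsWithin x (I ∩ Iio x)) (nhds (g x)))

/-- `d 0, …, d n` is the system of generalized derivatives of `f` on `I` with respect to the
gauge sequence `w`; i.e., `f ∈ L^n` with `f^{(j)} = d j` for `j = 0, …, n`. -/
structure IsGenL (I : Set ℝ) (w : ℕ → ℝ → ℝ) (n : ℕ) (f : ℝ → ℝ) (d : ℕ → ℝ → ℝ) : Prop where
  base : ∀ x ∈ I, f x = d 0 x * w 0 x
  ld : IsLD I (d n)
  integrable : ∀ j < n, ∀ z ∈ I, ∀ x ∈ I,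
    IntervalIntegrable (fun u => d (j + 1) u * w (j + 1) u) volume z x
  deriv_eq : ∀ j < n, ∀ z ∈ I, ∀ x ∈ I,
    d j x = d j z + ∫ u in z..x, d (j + 1) u * w (j + 1) u

/-- `f ∈ F_+^{k:n}(I)` (with derivative system `d`): all the generalized derivatives
`f^{(j)} = d j` of orders `j = k-1, …, n` are nondecreasing on `I`. -/
def MemF (I : Set ℝ) (w : ℕ → ℝ → ℝ) (k n : ℕ) (f : ℝ → ℝ) (d : ℕ → ℝ → ℝ) : Prop :=
  IsGenL I w n f d ∧ ∀ j, k - 1 ≤ j → j ≤ n → MonotoneOn (d j) I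

/-- `w` is a sequence of positive, Borel-measurable, locally bounded gauge functions on `I`. -/
def IsGauge (I : Set ℝ) (w : ℕ → ℝ → ℝ) : Prop :=
  ∀ j, (∀ x ∈ I, 0 < w j x) ∧ Measurable (fun x : I => w j x) ∧
    ∀ K ⊆ I, IsCompact K → ∃ C, ∀ x ∈ K, |w j x| ≤ C

def pAux (w : ℕ → ℝ → ℝ) (t : ℝ) (m : ℕ) : ℕ → ℝ → ℝ
  | 0 => w m
  | (i + 1) => fun x => w (m - (i + 1)) x * ∫ u in t..x, pAux w t m i u

/-- The `w`-polynomial `p_{t;j,m}` (for `t ∈ I`). -/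
def pfun (w : ℕ → ℝ → ℝ) (t : ℝ) (j m : ℕ) : ℝ → ℝ := pAux w t m (m - j)

/-- The "positive part" `p^+_{t;j,m}`. -/
def pplus (w : ℕ → ℝ → ℝ) (t : ℝ) (j m : ℕ) : ℝ → ℝ := fun x =>
  if t ≤ x then pfun w t j m x else 0

def pAuxE (w : ℕ → ℝ → ℝ) (I : Set ℝ) (m : ℕ) : ℕ → ℝ → ℝ≥0∞
  | 0 => fun x => ENNReal.ofReal (w m x)
  | (i + 1) => fun x =>
      ENNReal.ofReal (w (m - (i + 1)) x) * ∫⁻ u in I ∩ Iio x, pAuxE w I m i u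

/-- `p_{a;j,m} : I → [0, ∞]`, where `a` is the left endpoint of `I` (the integrals from `a`
are taken over `(a, x) ∩ I = I ∩ Iio x`). -/
def pE (w : ℕ → ℝ → ℝ) (I : Set ℝ) (j m : ℕ) : ℝ → ℝ≥0∞ := pAuxE w I m (m - j)

/-- The filter of `x ↓ a` within `I`, `a` being the left endpoint of `I`. -/
def leftEndFilter (I : Set ℝ) : Filter ℝ := ⨅ c ∈ I, Filter.principal (I ∩ Iic c)

/-- `ν(f) = ∫_I f dν ∈ [−∞, ∞]`. -/
def nuEval (ν : Measure ℝ) (I : Set ℝ) (f : ℝ → ℝ) : EReal :=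
  ((∫⁻ x in I, ENNReal.ofReal (f x) ∂ν : ℝ≥0∞) : EReal)
    - ((∫⁻ x in I, ENNReal.ofReal (-f x) ∂ν : ℝ≥0∞) : EReal)

/-- The expectation `E g ∈ [−∞, ∞]` (in the extended sense). -/
def eval' {α : Type*} [MeasurableSpace α] (P : Measure α) (g : α → ℝ) : EReal :=
  ((∫⁻ a, ENNReal.ofReal (g a) ∂P : ℝ≥0∞) : EReal)
    - ((∫⁻ a, ENNReal.ofReal (-g a) ∂P : ℝ≥0∞) : EReal)


lemma bound_mul {I : Set ℝ} (g W : ℝ → ℝ)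
    (hWb : ∀ K ⊆ I, IsCompact K → ∃ C, ∀ x ∈ K, |W x| ≤ C)
    (hg : ContinuousOn g I) {a b : ℝ} (hab : uIcc a b ⊆ I) :
    ∃ C, 0 ≤ C ∧ ∀ x ∈ uIcc a b, |g x * W x| ≤ C := by
  obtain ⟨C₁, hC₁⟩ := isCompact_uIcc.exists_bound_of_continuousOn (hg.mono hab)
  obtain ⟨C₂, hC₂⟩ := hWb _ hab isCompact_uIcc
  refine ⟨max C₁ 0 * max C₂ 0, by positivity, fun x hx => ?_⟩
  rw [abs_mul]
  have h1 : |g x| ≤ max C₁ 0 := le_trans (by simpa using hC₁ x hx) (le_max_left _ _)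
  have h2 : |W x| ≤ max C₂ 0 := le_trans (hC₂ x hx) (le_max_left _ _)
  exact mul_le_mul h1 h2 (abs_nonneg _) (le_max_right _ _)

lemma intInt_mul {I : Set ℝ} (hI : I.OrdConnected) (g W : ℝ → ℝ) (hW : Measurable W)
    (hWb : ∀ K ⊆ I, IsCompact K → ∃ C, ∀ x ∈ K, |W x| ≤ C)
    (hg : ContinuousOn g I) {a b : ℝ} (ha : a ∈ I) (hb : b ∈ I) :
    IntervalIntegrable (fun u => g u * W u) volume a b := by
  have hab : uIcc a b ⊆ I := hI.uIcc_subset ha hb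
  obtain ⟨C, hC0, hC⟩ := bound_mul g W hWb hg hab
  rw [intervalIntegrable_iff]
  have hmeas : AEStronglyMeasurable (fun u => g u * W u) (volume.restrict (Set.uIoc a b)) :=
    ((hg.mono (Set.uIoc_subset_uIcc.trans hab)).aestronglyMeasurable measurableSet_uIoc).mul
      (hW.aestronglyMeasurable.restrict)
  refine ⟨hmeas, ?_⟩
  have hlt : volume (Set.uIoc a b) < ⊤ := by rw [Set.uIoc]; exact measure_Ioc_lt_top
  apply HasFiniteIntegral.restrict_of_bounded (C := C) hlt
  filter_upwards [ae_restrict_mem measurableSet_uIoc] with x hx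
  rw [Real.norm_eq_abs]; exact hC x (uIoc_subset_uIcc hx)

lemma cont_primitive {I : Set ℝ} (hI : I.OrdConnected) {z : ℝ} (hz : z ∈ I) (g : ℝ → ℝ)
    (hint : ∀ a ∈ I, ∀ b ∈ I, IntervalIntegrable g volume a b)
    (hbd : ∀ a ∈ I, ∀ b ∈ I, ∃ C, 0 ≤ C ∧ ∀ x ∈ uIcc a b, |g x| ≤ C) :
    ContinuousOn (fun x => ∫ u in z..x, g u) I := by
  intro x₀ hx₀
  obtain ⟨v, hvI, hx₀v, hv⟩ : ∃ v, v ∈ I ∧ x₀ ≤ v ∧ ∀ᶠ x in nhdsWithin x₀ I, x ≤ v := by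
    by_cases h : ∃ y ∈ I, x₀ < y
    · obtain ⟨y, hy, hxy⟩ := h
      exact ⟨y, hy, hxy.le,
        ((eventually_lt_nhds hxy).filter_mono nhdsWithin_le_nhds).mono fun x hx => hx.le⟩
    · push_neg at h
      exact ⟨x₀, hx₀, le_refl _, eventually_mem_nhdsWithin.mono fun x hx => h x hx⟩
  obtain ⟨u, huI, hux₀, hu⟩ : ∃ u, u ∈ I ∧ u ≤ x₀ ∧ ∀ᶠ x in nhdsWithin x₀ I, u ≤ x := by
    by_cases h : ∃ y ∈ I, y < x₀
    · obtain ⟨y, hy, hxy⟩ := h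
      exact ⟨y, hy, hxy.le,
        ((eventually_gt_nhds hxy).filter_mono nhdsWithin_le_nhds).mono fun x hx => hx.le⟩
    · push_neg at h
      exact ⟨x₀, hx₀, le_refl _, eventually_mem_nhdsWithin.mono fun x hx => h x hx⟩
  obtain ⟨C, hC0, hC⟩ := hbd u huI v hvI
  have huv : u ≤ v := hux₀.trans hx₀v
  have hIcc : Icc u v ⊆ uIcc u v := by rw [uIcc_of_le huv]
  rw [ContinuousWithinAt, tendsto_iff_dist_tendsto_zero]
  apply squeeze_zero' (Eventually.of_forall fun _ => dist_nonneg)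
      (g := fun x => C * |x - x₀|)
  · filter_upwards [hv, hu, eventually_mem_nhdsWithin] with x hxv hux hxI
    have hx₀uv : x₀ ∈ Icc u v := ⟨hux₀, hx₀v⟩
    have hxuv : x ∈ Icc u v := ⟨hux, hxv⟩
    have hsplit : (∫ t in z..x₀, g t) + ∫ t in x₀..x, g t = ∫ t in z..x, g t :=
      intervalIntegral.integral_add_adjacent_intervals (hint z hz x₀ hx₀) (hint x₀ hx₀ x hxI)
    have hdiff : (∫ t in z..x, g t) - (∫ t in z..x₀, g t) = ∫ t in x₀..x, g t := by
      linarith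
    rw [Real.dist_eq, hdiff]
    have : ‖∫ t in x₀..x, g t‖ ≤ C * |x - x₀| := by
      apply intervalIntegral.norm_integral_le_of_norm_le_const
      intro y hy
      have : y ∈ Icc u v :=
        ordConnected_Icc.uIcc_subset hx₀uv hxuv (uIoc_subset_uIcc hy)
      simpa using hC y (hIcc this)
    simpa using this
  · have h0 : Tendsto (fun x : ℝ => C * |x - x₀|) (nhds x₀) (nhds (C * |x₀ - x₀|)) :=
      (continuous_const.mul ((continuous_id.sub continuous_const).abs)).tendsto x₀
    have h1 := h0.mono_left (nhdsWithin_le_nhds (s := I))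
    simpa using h1

def Dfun (W : ℕ → ℝ → ℝ) (z : ℝ) (c : ℕ → ℝ) (k : ℕ) : ℕ → ℝ → ℝ
  | 0 => fun _ => c k
  | (i + 1) => fun x => c (k - (i + 1)) + ∫ u in z..x, Dfun W z c k i u * W (k - i) u


/-- Proposition `interp`: interpolation/tangency property of
`w`-polynomials: unique `p ∈ P^{≤k}` with prescribed generalized derivatives at `z`;
moreover `p` is locally bounded and `p/w₀` is continuous on `I`. -/
theorem stmt_2 (I : Set ℝ) (hI : I.OrdConnected) (hIne : ∃ p ∈ I, ∃ q ∈ I, p < q)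
    (w : ℕ → ℝ → ℝ) (hw : IsGauge I w)
    (k : ℕ) (z : ℝ) (hz : z ∈ I) (c : ℕ → ℝ) :
    ∃ p : ℝ → ℝ, ∃ dp : ℕ → ℝ → ℝ,
      IsGenL I w k p dp ∧ (∃ c', ∀ x ∈ I, dp k x = c') ∧ (∀ j ≤ k, dp j z = c j) ∧
      (∀ K ⊆ I, IsCompact K → ∃ C, ∀ x ∈ K, |p x| ≤ C) ∧
      ContinuousOn (fun x => p x / w 0 x) I ∧
      (∀ q dq, IsGenL I w k q dq → (∃ c', ∀ x ∈ I, dq k x = c') →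
        (∀ j ≤ k, dq j z = c j) → ∀ x ∈ I, q x = p x) := by
  classical
  set W : ℕ → ℝ → ℝ := fun j x => if x ∈ I then w j x else 0 with hWdef
  have hImeas : MeasurableSet I := hI.measurableSet
  have hWmeas : ∀ j, Measurable (W j) := by
    intro j
    have h := Measurable.dite (s := I) (f := fun x : I => w j x)
      (g := fun _ : ↥(Iᶜ) => (0 : ℝ)) ((hw j).2.1) measurable_const hImeas
    simpa [hWdef] using h
  have hWbd : ∀ j, ∀ K ⊆ I, IsCompact K → ∃ C, ∀ x ∈ K, |W j x| ≤ C := by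
    intro j K hKI hK
    obtain ⟨C, hC⟩ := (hw j).2.2 K hKI hK
    exact ⟨C, fun x hx => by rw [hWdef]; simp only [if_pos (hKI hx)]; exact hC x hx⟩
  have hWeq : ∀ j, ∀ x ∈ I, W j x = w j x := fun j x hx => if_pos hx
  -- continuity of the building blocks
  have hDcont : ∀ i, ContinuousOn (Dfun W z c k i) I := by
    intro i
    induction i with
    | zero => simpa [Dfun] using continuousOn_const
    | succ i ih =>
      have : ContinuousOn
          (fun x => c (k - (i + 1)) + ∫ u in z..x, Dfun W z c k i u * W (k - i) u) I := by
        apply ContinuousOn.add continuousOn_const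
        apply cont_primitive hI hz
        · intro a ha b hb
          exact intInt_mul hI _ _ (hWmeas _) (hWbd _) ih ha hb
        · intro a ha b hb
          exact bound_mul _ _ (hWbd _) ih (hI.uIcc_subset ha hb)
      simpa [Dfun] using this
  have hDint : ∀ i m, ∀ a ∈ I, ∀ b ∈ I,
      IntervalIntegrable (fun u => Dfun W z c k i u * W m u) volume a b :=
    fun i m a ha b hb => intInt_mul hI _ _ (hWmeas m) (hWbd m) (hDcont i) ha hb
  have hdp_eq : ∀ j, j < k → ∀ x, Dfun W z c k (k - j) x
      = c j + ∫ u in z..x, Dfun W z c k (k - (j + 1)) u * W (j + 1) u := by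
    intro j hj x
    have h1 : k - j = (k - (j + 1)) + 1 := by omega
    have h2 : k - (k - (j + 1) + 1) = j := by omega
    have h3 : k - (k - (j + 1)) = j + 1 := by omega
    rw [h1]
    show c (k - (k - (j + 1) + 1)) + ∫ u in z..x,
      Dfun W z c k (k - (j + 1)) u * W (k - (k - (j + 1))) u = _
    rw [h2, h3]
  have hdpk : ∀ x, Dfun W z c k (k - k) x = c k := by
    intro x; rw [Nat.sub_self]; rfl
  refine ⟨fun x => Dfun W z c k (k - 0) x * w 0 x, fun j => Dfun W z c k (k - j),
    ⟨fun x _ => rfl, ?_, ?_, ?_⟩, ⟨c k, fun x _ => hdpk x⟩, ?_, ?_, ?_, ?_⟩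
  · -- IsLD
    have hfun : Dfun W z c k (k - k) = fun _ => c k := funext hdpk
    constructor
    · intro x _ _
      rw [hfun]
      exact tendsto_const_nhds
    · intro x _ _
      rw [hfun]
      exact tendsto_const_nhds
  · -- integrable
    intro j hj z' hz' x hx
    have base := hDint (k - (j + 1)) (j + 1) z' hz' x hx
    rw [intervalIntegrable_iff] at base ⊢
    refine base.congr_fun ?_ measurableSet_uIoc
    intro u hu
    have huI : u ∈ I := hI.uIcc_subset hz' hx (uIoc_subset_uIcc hu)
    simp only [hWeq (j + 1) u huI]
  · -- deriv_eq
    intro j hj z' hz' x hx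
    have hadd := intervalIntegral.integral_add_adjacent_intervals
      (hDint (k - (j + 1)) (j + 1) z hz z' hz') (hDint (k - (j + 1)) (j + 1) z' hz' x hx)
    have hco : ∫ u in z'..x, Dfun W z c k (k - (j + 1)) u * w (j + 1) u
        = ∫ u in z'..x, Dfun W z c k (k - (j + 1)) u * W (j + 1) u := by
      apply intervalIntegral.integral_congr
      intro u hu
      show Dfun W z c k (k - (j + 1)) u * w (j + 1) u
        = Dfun W z c k (k - (j + 1)) u * W (j + 1) u
      rw [hWeq (j + 1) u (hI.uIcc_subset hz' hx hu)]
    rw [hdp_eq j hj x, hdp_eq j hj z', hco]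
    linarith
  · -- values at z
    intro j hj
    show Dfun W z c k (k - j) z = c j
    rcases eq_or_lt_of_le hj with h | h
    · subst h; exact hdpk z
    · rw [hdp_eq j h z, intervalIntegral.integral_same, add_zero]
  · -- local bound
    intro K hKI hK
    obtain ⟨C₁, hC₁⟩ := hK.exists_bound_of_continuousOn ((hDcont (k - 0)).mono hKI)
    obtain ⟨C₂, hC₂⟩ := (hw 0).2.2 K hKI hK
    refine ⟨max C₁ 0 * max C₂ 0, fun x hx => ?_⟩
    rw [abs_mul]
    have h1 : |Dfun W z c k (k - 0) x| ≤ max C₁ 0 :=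
      le_trans (by simpa using hC₁ x hx) (le_max_left _ _)
    exact mul_le_mul h1 (le_trans (hC₂ x hx) (le_max_left _ _)) (abs_nonneg _)
      (le_max_right _ _)
  · -- continuity of p / w 0
    apply (hDcont (k - 0)).congr
    intro x hx
    show Dfun W z c k (k - 0) x * w 0 x / w 0 x = Dfun W z c k (k - 0) x
    exact mul_div_cancel_right₀ _ (ne_of_gt ((hw 0).1 x hx))
  · -- uniqueness
    intro q dq hq hc' hder
    obtain ⟨c', hc'⟩ := hc'
    have key : ∀ i, ∀ j, j ≤ k → k - j = i → ∀ x ∈ I, dq j x = Dfun W z c k (k - j) x := by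
      intro i
      induction i with
      | zero =>
        intro j hj hji x hx
        have hjk : j = k := by omega
        subst hjk
        rw [hc' x hx, hdpk x, ← hder _ le_rfl, hc' z hz]
      | succ i ih =>
        intro j hj hji x hx
        have hjlt : j < k := by omega
        have e1 := hq.deriv_eq j hjlt z hz x hx
        have hco : ∫ u in z..x, dq (j + 1) u * w (j + 1) u
            = ∫ u in z..x, Dfun W z c k (k - (j + 1)) u * W (j + 1) u := by
          apply intervalIntegral.integral_congr
          intro u hu
          have huI : u ∈ I := hI.uIcc_subset hz hx hu
          show dq (j + 1) u * w (j + 1) u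
            = Dfun W z c k (k - (j + 1)) u * W (j + 1) u
          rw [ih (j + 1) (by omega) (by omega) u huI, hWeq (j + 1) u huI]
        rw [e1, hder j hjlt.le, hco, hdp_eq j hjlt x]
    intro x hx
    rw [hq.base x hx, key (k - 0) 0 (Nat.zero_le _) rfl x hx]

end
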